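/- arXiv:1911.04980 — 3 statements merged into one kernel-verified Lean document; each statement's English description precedes it below -/
import Mathlib

section
/- Let (A, ρ, [.,.]) be a Lie algebroid and Π a bivector field on A. The Jacobiator J_Π(α,β,γ) = ∮ [[α,β]_Π, γ]_Π of the Koszul bracket satisfies J_Π(α,β,γ) = ∮ L^ρ_{♯_Π([α,β]_Π) − [♯_Π(α),♯_Π(β)]} γ − ∮ d_ρ( Π(L^ρ_{♯_Π(α)}β, γ) + Π(β, L^ρ_{♯_Π(α)}γ) ), where ∮ denotes the cyclic sum over α, β, γ. -/
/-- Algebraic model of a skew algebroid over a base manifold: `R` plays the role of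
the ring of smooth functions, `G` the module of sections of the anchored bundle,
`bracket` the skew-symmetric bracket satisfying the Leibniz rule, and `anchor`
gives the action of sections on functions by derivations. -/
structure SkewAlgebroid (R : Type*) [CommRing R] (G : Type*)
    [AddCommGroup G] [Module R G] where
  bracket : G → G → G
  anchor : G → R → R
  bracket_add_left : ∀ a b c, bracket (a + b) c = bracket a c + bracket b c
  bracket_skew : ∀ a b, bracket a b = - bracket b a
  anchor_add : ∀ a b φ, anchor (a + b) φ = anchor a φ + anchor b φ
  anchor_smul : ∀ (φ : R) a ψ, anchor (φ • a) ψ = φ * anchor a ψ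
  anchor_map_add : ∀ a φ ψ, anchor a (φ + ψ) = anchor a φ + anchor a ψ
  anchor_map_mul : ∀ a φ ψ, anchor a (φ * ψ) = φ * anchor a ψ + ψ * anchor a φ
  leibniz : ∀ a (φ : R) b, bracket a (φ • b) = φ • bracket a b + anchor a φ • b

namespace SkewAlgebroid

variable {R : Type*} [CommRing R] {G : Type*} [AddCommGroup G] [Module R G]

/-- The bivector field associated to a sharp map `♯ : A* → A`: `Π(α,β) = β(♯α)`. -/
def biv (sharp : (G →ₗ[R] R) → G) (α β : G →ₗ[R] R) : R := β (sharp α)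

/-- `♯_{Π,ξ}(α) = ♯_Π(α) + α(ξ)ξ`. -/
def sharpJ (sharp : (G →ₗ[R] R) → G) (ξ : G) (α : G →ₗ[R] R) : G := sharp α + α ξ • ξ

/-- `(ξ ∧ Π)(α,β,γ)`. -/
def wedgeVB (ξ : G) (sharp : (G →ₗ[R] R) → G) (α β γ : G →ₗ[R] R) : R :=
  α ξ * biv sharp β γ - β ξ * biv sharp α γ + γ ξ * biv sharp α β

variable (S : SkewAlgebroid R G)

lemma bracket_add_right (a b c : G) :
    S.bracket a (b + c) = S.bracket a b + S.bracket a c := by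
  rw [S.bracket_skew a (b + c), S.bracket_add_left, S.bracket_skew b a, S.bracket_skew c a]
  abel

/-- The Lie `A`-derivative of a 1-form along a section. -/
def lieDeriv (a : G) (α : G →ₗ[R] R) : G →ₗ[R] R where
  toFun b := S.anchor a (α b) - α (S.bracket a b)
  map_add' b c := by
    rw [map_add, S.anchor_map_add, S.bracket_add_right, map_add]; ring
  map_smul' φ b := by
    rw [map_smul, smul_eq_mul, S.anchor_map_mul, S.leibniz, map_add, map_smul, map_smul,
      smul_eq_mul, smul_eq_mul, RingHom.id_apply, smul_eq_mul]
    ring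

/-- The exterior `A`-differential of a function, as a 1-form. -/
def dform (φ : R) : G →ₗ[R] R where
  toFun a := S.anchor a φ
  map_add' a b := S.anchor_add a b φ
  map_smul' c a := by rw [S.anchor_smul]; rfl

/-- The exterior `A`-differential of a 1-form. -/
def dOne (η : G →ₗ[R] R) (a b : G) : R :=
  S.anchor a (η b) - S.anchor b (η a) - η (S.bracket a b)

/-- The exterior `A`-differential of a 2-form. -/
def dTwo (Ω : G →ₗ[R] G →ₗ[R] R) (a b c : G) : R :=
  S.anchor a (Ω b c) - S.anchor b (Ω a c) + S.anchor c (Ω a b)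
    - Ω (S.bracket a b) c + Ω (S.bracket a c) b - Ω (S.bracket b c) a

/-- The Lie `A`-derivative of a 2-form along a section. -/
def lieTwo (ξ : G) (Ω : G →ₗ[R] G →ₗ[R] R) (a b : G) : R :=
  S.anchor ξ (Ω a b) - Ω (S.bracket ξ a) b - Ω a (S.bracket ξ b)

/-- The Koszul bracket of 1-forms associated with the bivector field given by `sharp`:
`[α,β]_Π = L_{♯α}β − L_{♯β}α − d_ρ(Π(α,β))`. -/
def koszul (sharp : (G →ₗ[R] R) → G) (α β : G →ₗ[R] R) : G →ₗ[R] R :=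
  S.lieDeriv (sharp α) β - S.lieDeriv (sharp β) α - S.dform (biv sharp α β)

/-- The Schouten–Nijenhuis bracket `[Π,Π]`, defined (as in the contravariant calculus)
by `[Π,Π] = −d_{ρ_Π}Π` via the structure `(ρ_Π, [.,.]_Π)` on the dual. -/
def schouten (sharp : (G →ₗ[R] R) → G) (α β γ : G →ₗ[R] R) : R :=
  -(S.anchor (sharp α) (biv sharp β γ) - S.anchor (sharp β) (biv sharp α γ)
      + S.anchor (sharp γ) (biv sharp α β)
      - biv sharp (S.koszul sharp α β) γ + biv sharp (S.koszul sharp α γ) β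
      - biv sharp (S.koszul sharp β γ) α)

/-- The Lie `A`-derivative `L^ρ_ξ Π` of the bivector field. -/
def lieBiv (ξ : G) (sharp : (G →ₗ[R] R) → G) (α β : G →ₗ[R] R) : R :=
  S.anchor ξ (biv sharp α β) - biv sharp (S.lieDeriv ξ α) β - biv sharp α (S.lieDeriv ξ β)

/-- The deformed dual bracket `[α,β]^λ_{Π,ξ}`. -/
def bracketJ (sharp : (G →ₗ[R] R) → G) (ξ : G) (lam : G →ₗ[R] R) (α β : G →ₗ[R] R) :
    G →ₗ[R] R :=
  S.koszul sharp α β + α ξ • (S.lieDeriv ξ β - β) - β ξ • (S.lieDeriv ξ α - α)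
    - biv sharp α β • lam

/-- The anchor is a bracket morphism (almost Lie algebroid condition). -/
def IsAlmostLie : Prop := ∀ a b φ,
  S.anchor (S.bracket a b) φ = S.anchor a (S.anchor b φ) - S.anchor b (S.anchor a φ)

/-- The Jacobi identity for the bracket (Lie algebroid condition). -/
def IsJacobi : Prop := ∀ a b c,
  S.bracket (S.bracket a b) c + S.bracket (S.bracket b c) a + S.bracket (S.bracket c a) b = 0

end SkewAlgebroid

open SkewAlgebroid

variable {R : Type*} [CommRing R] {G : Type*} [AddCommGroup G] [Module R G]


namespace SkewAlgebroid

variable {R : Type*} [CommRing R] {G : Type*} [AddCommGroup G] [Module R G]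
variable (S : SkewAlgebroid R G)

lemma anchor_neg (a : G) (φ : R) : S.anchor (-a) φ = - S.anchor a φ := by
  have := S.anchor_smul (-1 : R) a φ
  simpa using this

lemma anchor_sub (a b : G) (φ : R) : S.anchor (a - b) φ = S.anchor a φ - S.anchor b φ := by
  rw [sub_eq_add_neg, S.anchor_add, S.anchor_neg, sub_eq_add_neg]

lemma anchor_map_zero (a : G) : S.anchor a (0 : R) = 0 := by
  have := S.anchor_map_add a 0 0
  simpa using this.symm

lemma anchor_map_neg (a : G) (φ : R) : S.anchor a (-φ) = - S.anchor a φ := by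
  have := S.anchor_map_add a φ (-φ)
  simp [S.anchor_map_zero] at this
  linear_combination -this

lemma anchor_map_sub (a : G) (φ ψ : R) :
    S.anchor a (φ - ψ) = S.anchor a φ - S.anchor a ψ := by
  rw [sub_eq_add_neg, S.anchor_map_add, S.anchor_map_neg, sub_eq_add_neg]

lemma bracket_zero_left (a : G) : S.bracket 0 a = 0 := by
  have := S.bracket_add_left 0 0 a
  simpa using this.symm

lemma bracket_neg_left (a b : G) : S.bracket (-a) b = - S.bracket a b := by
  have := S.bracket_add_left a (-a) b
  simp [S.bracket_zero_left] at this
  exact eq_neg_of_add_eq_zero_right this.symm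

lemma bracket_sub_left (a b c : G) :
    S.bracket (a - b) c = S.bracket a c - S.bracket b c := by
  rw [sub_eq_add_neg, S.bracket_add_left, S.bracket_neg_left, sub_eq_add_neg]

lemma bracket_neg_right (a b : G) : S.bracket a (-b) = - S.bracket a b := by
  rw [S.bracket_skew, S.bracket_neg_left, S.bracket_skew b a, neg_neg]

lemma jacobi_leibniz (hJac : S.IsJacobi) (u v w : G) :
    S.bracket (S.bracket u v) w = S.bracket u (S.bracket v w) - S.bracket v (S.bracket u w) := by
  have h := hJac u v w
  have h1 : S.bracket (S.bracket v w) u = - S.bracket u (S.bracket v w) :=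
    S.bracket_skew _ _
  have h2 : S.bracket (S.bracket w u) v = S.bracket v (S.bracket u w) := by
    rw [S.bracket_skew w u, S.bracket_neg_left, S.bracket_skew]
    rw [neg_neg]
  rw [h1, h2] at h
  have : S.bracket (S.bracket u v) w = S.bracket u (S.bracket v w) - S.bracket v (S.bracket u w) := by
    have := h
    abel_nf at this ⊢
    linear_combination (norm := abel) this
  exact this

end SkewAlgebroid

/-- the Jacobiator of the Koszul bracket on a Lie algebroid:
`J_Π(α,β,γ) = ∮ L_{♯_Π[α,β]_Π − [♯_Πα,♯_Πβ]} γ − ∮ d_ρ(Π(L_{♯_Πα}β,γ) + Π(β,L_{♯_Πα}γ))`. -/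
theorem koszul_jacobiator
    (S : SkewAlgebroid R G) (hJac : S.IsJacobi) (hAL : S.IsAlmostLie)
    (sharp : (G →ₗ[R] R) → G)
    (hskew : ∀ α β : G →ₗ[R] R, α (sharp β) = - β (sharp α))
    (α β γ : G →ₗ[R] R) :
    S.koszul sharp (S.koszul sharp α β) γ + S.koszul sharp (S.koszul sharp β γ) α
        + S.koszul sharp (S.koszul sharp γ α) β
      = (S.lieDeriv (sharp (S.koszul sharp α β) - S.bracket (sharp α) (sharp β)) γ
          + S.lieDeriv (sharp (S.koszul sharp β γ) - S.bracket (sharp β) (sharp γ)) α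
          + S.lieDeriv (sharp (S.koszul sharp γ α) - S.bracket (sharp γ) (sharp α)) β)
        - (S.dform (biv sharp (S.lieDeriv (sharp α) β) γ + biv sharp β (S.lieDeriv (sharp α) γ))
          + S.dform (biv sharp (S.lieDeriv (sharp β) γ) α + biv sharp γ (S.lieDeriv (sharp β) α))
          + S.dform (biv sharp (S.lieDeriv (sharp γ) α) β
              + biv sharp α (S.lieDeriv (sharp γ) β))) := by
  have hAL' : ∀ a b φ, S.anchor (S.bracket a b) φ
      = S.anchor a (S.anchor b φ) - S.anchor b (S.anchor a φ) := hAL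
  have hb : ∀ X Y : G →ₗ[R] R, biv sharp X Y = - X (sharp Y) := fun X Y => by
    rw [biv, hskew]
  apply LinearMap.ext; intro x
  simp only [koszul, hb]
  simp only [hskew β (S.lieDeriv (sharp α) γ), hskew γ (S.lieDeriv (sharp β) α),
    hskew α (S.lieDeriv (sharp γ) β)]
  simp only [lieDeriv, dform, LinearMap.sub_apply, LinearMap.add_apply,
    LinearMap.neg_apply, LinearMap.coe_mk, AddHom.coe_mk, map_sub, map_add, map_neg,
    S.anchor_sub, S.anchor_neg, S.anchor_map_add, S.anchor_map_sub, S.anchor_map_neg,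
    S.bracket_sub_left, S.bracket_neg_left, S.bracket_neg_right,
    S.jacobi_leibniz hJac, hAL']
  simp only [hskew β α, hskew γ α, hskew γ β, map_sub, map_add, map_neg,
    S.anchor_map_add, S.anchor_map_sub, S.anchor_map_neg]
  ring
end

section
/- Let (Π, ξ) be a Jacobi structure on a Lie algebroid (A, ρ, [.,.]). Then L^ρ_ξ([α,β]_Π) − [L^ρ_ξα, β]_Π − [α, L^ρ_ξβ]_Π = L^ρ_{[ξ,♯_Π(α)] − ♯_Π(L^ρ_ξα)} β − L^ρ_{[ξ,♯_Π(β)] − ♯_Π(L^ρ_ξβ)} α − d_ρ(L^ρ_ξΠ(α,β)); in particular, since L^ρ_ξΠ = 0 implies [ξ,♯_Π(α)] = ♯_Π(L^ρ_ξα), the Lie derivative L^ρ_ξ is a derivation of the Koszul bracket. -/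
open SkewAlgebroid

variable {R : Type*} [CommRing R] {G : Type*} [AddCommGroup G] [Module R G]

section AuxLemmas

variable (S : SkewAlgebroid R G)

lemma aux_anchor_zero (a : G) : S.anchor a 0 = 0 := by
  have h := S.anchor_map_add a 0 0
  rw [add_zero] at h
  linear_combination -h

lemma aux_anchor_map_sub (a : G) (φ ψ : R) :
    S.anchor a (φ - ψ) = S.anchor a φ - S.anchor a ψ := by
  have h := S.anchor_map_add a (φ - ψ) ψ
  rw [sub_add_cancel] at h
  linear_combination -h

lemma aux_anchor_zero_left (φ : R) : S.anchor 0 φ = 0 := by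
  have h := S.anchor_add (0 : G) 0 φ
  rw [add_zero] at h
  linear_combination -h

lemma aux_bracket_zero_left (b : G) : S.bracket 0 b = 0 := by
  have h := S.bracket_add_left (0 : G) 0 b
  rw [add_zero] at h
  exact add_eq_left.mp h.symm

lemma aux_bracket_neg_left (x a : G) : S.bracket (-x) a = - S.bracket x a := by
  have h := S.bracket_add_left x (-x) a
  rw [add_neg_cancel, aux_bracket_zero_left] at h
  exact (neg_eq_of_add_eq_zero_right h.symm).symm

lemma aux_lieDeriv_apply (a : G) (η : G →ₗ[R] R) (c : G) :
    S.lieDeriv a η c = S.anchor a (η c) - η (S.bracket a c) := rfl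

lemma aux_lieDeriv_zero (η : G →ₗ[R] R) : S.lieDeriv 0 η = 0 := by
  apply LinearMap.ext; intro c
  rw [aux_lieDeriv_apply, aux_anchor_zero_left, aux_bracket_zero_left, map_zero,
    LinearMap.zero_apply, sub_zero]

lemma aux_dform_apply (φ : R) (c : G) : S.dform φ c = S.anchor c φ := rfl

lemma aux_dform_zero : S.dform (0 : R) = 0 := by
  apply LinearMap.ext; intro c
  rw [aux_dform_apply, aux_anchor_zero, LinearMap.zero_apply]

lemma aux_lieDeriv_sub (a : G) (η θ : G →ₗ[R] R) :
    S.lieDeriv a (η - θ) = S.lieDeriv a η - S.lieDeriv a θ := by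
  apply LinearMap.ext; intro c
  simp only [aux_lieDeriv_apply, LinearMap.sub_apply, aux_anchor_map_sub]
  ring

lemma aux_dform_add (φ ψ : R) : S.dform (φ + ψ) = S.dform φ + S.dform ψ := by
  apply LinearMap.ext; intro c
  simp only [aux_dform_apply, LinearMap.add_apply, S.anchor_map_add]

lemma aux_lieDeriv_dform (hAL : S.IsAlmostLie) (ξ : G) (φ : R) :
    S.lieDeriv ξ (S.dform φ) = S.dform (S.anchor ξ φ) := by
  apply LinearMap.ext; intro c
  simp only [aux_lieDeriv_apply, aux_dform_apply, hAL ξ c φ]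
  ring

lemma aux_lieDeriv_lieDeriv (hJac : S.IsJacobi) (hAL : S.IsAlmostLie)
    (ξ a : G) (η : G →ₗ[R] R) :
    S.lieDeriv ξ (S.lieDeriv a η)
      = S.lieDeriv a (S.lieDeriv ξ η) + S.lieDeriv (S.bracket ξ a) η := by
  apply LinearMap.ext; intro c
  have hj' : η (S.bracket (S.bracket ξ a) c)
      = η (S.bracket ξ (S.bracket a c)) - η (S.bracket a (S.bracket ξ c)) := by
    have h0 := congrArg η (hJac ξ a c)
    rw [map_add, map_add, map_zero] at h0
    have e1 : η (S.bracket (S.bracket a c) ξ) = - η (S.bracket ξ (S.bracket a c)) := by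
      rw [S.bracket_skew (S.bracket a c) ξ, map_neg]
    have e2 : η (S.bracket (S.bracket c ξ) a) = η (S.bracket a (S.bracket ξ c)) := by
      rw [S.bracket_skew c ξ, aux_bracket_neg_left, map_neg,
        S.bracket_skew (S.bracket ξ c) a, map_neg, neg_neg]
    rw [e1, e2] at h0
    linear_combination h0
  simp only [aux_lieDeriv_apply, LinearMap.add_apply, aux_anchor_map_sub,
    hAL ξ a (η c), map_sub, hj']
  ring

end AuxLemmas

/-- for a Jacobi structure `(Π,ξ)` on a Lie algebroid,
`L_ξ[α,β]_Π − [L_ξα,β]_Π − [α,L_ξβ]_Π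
   = L_{[ξ,♯α]−♯(L_ξα)}β − L_{[ξ,♯β]−♯(L_ξβ)}α − d_ρ(L_ξΠ(α,β))`;
in particular (since `L_ξΠ = 0` forces `[ξ,♯α] = ♯(L_ξα)`) the Lie derivative `L_ξ`
is a derivation of the Koszul bracket. -/
theorem lieDeriv_derivation_of_koszul
    (S : SkewAlgebroid R G) (hJac : S.IsJacobi) (hAL : S.IsAlmostLie)
    (hsep : ∀ v : G, (∀ β : G →ₗ[R] R, β v = 0) → v = 0)
    (sharp : (G →ₗ[R] R) → G)
    (hskew : ∀ α β : G →ₗ[R] R, α (sharp β) = - β (sharp α))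
    (ξ : G)
    (hJ1 : ∀ α β γ : G →ₗ[R] R, S.schouten sharp α β γ = 2 * wedgeVB ξ sharp α β γ)
    (hJ2 : ∀ α β : G →ₗ[R] R, S.lieBiv ξ sharp α β = 0) :
    (∀ α β : G →ₗ[R] R,
        S.lieDeriv ξ (S.koszul sharp α β) - S.koszul sharp (S.lieDeriv ξ α) β
            - S.koszul sharp α (S.lieDeriv ξ β)
          = S.lieDeriv (S.bracket ξ (sharp α) - sharp (S.lieDeriv ξ α)) β
            - S.lieDeriv (S.bracket ξ (sharp β) - sharp (S.lieDeriv ξ β)) α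
            - S.dform (S.lieBiv ξ sharp α β))
    ∧ (∀ α β : G →ₗ[R] R,
        S.lieDeriv ξ (S.koszul sharp α β)
          = S.koszul sharp (S.lieDeriv ξ α) β + S.koszul sharp α (S.lieDeriv ξ β)) := by
  -- Key consequence of `L_ξ Π = 0`: the sharp map intertwines the Lie derivatives.
  have hsharp : ∀ α : G →ₗ[R] R, sharp (S.lieDeriv ξ α) = S.bracket ξ (sharp α) := by
    intro α
    have h : S.bracket ξ (sharp α) - sharp (S.lieDeriv ξ α) = 0 := by
      apply hsep
      intro β
      have h2 := hJ2 α β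
      simp only [SkewAlgebroid.lieBiv, SkewAlgebroid.biv, aux_lieDeriv_apply] at h2
      rw [map_sub]
      linear_combination h2
    exact (sub_eq_zero.mp h).symm
  -- The derivation property.
  have hder : ∀ α β : G →ₗ[R] R, S.lieDeriv ξ (S.koszul sharp α β)
      = S.koszul sharp (S.lieDeriv ξ α) β + S.koszul sharp α (S.lieDeriv ξ β) := by
    intro α β
    unfold SkewAlgebroid.koszul
    rw [aux_lieDeriv_sub, aux_lieDeriv_sub,
      aux_lieDeriv_lieDeriv S hJac hAL ξ (sharp α) β,
      aux_lieDeriv_lieDeriv S hJac hAL ξ (sharp β) α,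
      aux_lieDeriv_dform S hAL, hsharp α, hsharp β]
    have hbivd : S.anchor ξ (biv sharp α β)
        = biv sharp (S.lieDeriv ξ α) β + biv sharp α (S.lieDeriv ξ β) := by
      have h2 := hJ2 α β
      unfold SkewAlgebroid.lieBiv at h2
      linear_combination h2
    rw [hbivd, aux_dform_add]
    abel
  refine ⟨fun α β => ?_, hder⟩
  rw [hsharp α, hsharp β, sub_self, sub_self, aux_lieDeriv_zero, aux_lieDeriv_zero,
    hJ2 α β, aux_dform_zero, hder α β]
  abel
end

section
/- Let (A, ρ, [.,.], η) be a contact Lie algebroid with associated Jacobi structure (Π, ξ). Then ♯_{Π,ξ}(η) = ξ and ♯_{Π,ξ}([α,β]^η_{Π,ξ}) = [♯_{Π,ξ}(α), ♯_{Π,ξ}(β)] for all α, β; hence (A*, ρ_{Π,ξ}, [.,.]^η_{Π,ξ}) is a Lie algebroid isomorphic to (A, ρ, [.,.]) via ♯_{Π,ξ}. -/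
open SkewAlgebroid

variable {R : Type*} [CommRing R] {G : Type*} [AddCommGroup G] [Module R G]


namespace ContactAux

variable {R : Type*} [CommRing R] {G : Type*} [AddCommGroup G] [Module R G]
variable (S : SkewAlgebroid R G)

lemma anchor_zero (a : G) : S.anchor a 0 = 0 := by
  have h := S.anchor_map_add a 0 0
  rw [add_zero] at h
  linear_combination -h

lemma anchor_one (a : G) : S.anchor a 1 = 0 := by
  have h := S.anchor_map_mul a 1 1
  rw [mul_one] at h
  linear_combination -h

lemma anchor_map_neg (a : G) (φ : R) : S.anchor a (-φ) = - S.anchor a φ := by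
  have h := S.anchor_map_add a φ (-φ)
  rw [add_neg_cancel, anchor_zero] at h
  linear_combination -h

lemma anchor_map_sub (a : G) (φ ψ : R) :
    S.anchor a (φ - ψ) = S.anchor a φ - S.anchor a ψ := by
  rw [sub_eq_add_neg, S.anchor_map_add, anchor_map_neg, sub_eq_add_neg]

lemma anchor_sub (a b : G) (φ : R) :
    S.anchor (a - b) φ = S.anchor a φ - S.anchor b φ := by
  have h1 : a - b = a + (-1 : R) • b := by module
  rw [h1, S.anchor_add, S.anchor_smul]; ring

lemma bracket_smul_left (φ : R) (a b : G) :
    S.bracket (φ • a) b = φ • S.bracket a b - S.anchor b φ • a := by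
  rw [S.bracket_skew (φ • a) b, S.leibniz, S.bracket_skew b a]
  module

lemma bracket_neg_left (a b : G) : S.bracket (-a) b = - S.bracket a b := by
  rw [← neg_one_smul R a, bracket_smul_left, anchor_map_neg, anchor_one]
  module

lemma bracket_sub_left (a b c : G) :
    S.bracket (a - b) c = S.bracket a c - S.bracket b c := by
  have h1 : a - b = a + (-1 : R) • b := by module
  rw [h1, S.bracket_add_left, bracket_smul_left, anchor_map_neg, anchor_one]
  module


section Contact

variable (η : G →ₗ[R] R) (ξ : G) (e : G ≃ₗ[R] (G →ₗ[R] R))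

lemma dOne_skew (a b : G) : S.dOne η a b = - S.dOne η b a := by
  have h : η (S.bracket b a) = - η (S.bracket a b) := by
    rw [S.bracket_skew b a, map_neg]
  simp only [SkewAlgebroid.dOne, h]; ring

lemma dOmega_zero (hJac : S.IsJacobi) (hAL : S.IsAlmostLie) (a b c : G) :
    S.anchor a (S.dOne η b c) - S.anchor b (S.dOne η a c) + S.anchor c (S.dOne η a b)
      - S.dOne η (S.bracket a b) c + S.dOne η (S.bracket a c) b
      - S.dOne η (S.bracket b c) a = 0 := by
  have hj := congrArg η (hJac a b c)
  simp only [map_add, map_zero] at hj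
  have s1 : η (S.bracket (S.bracket a c) b) = - η (S.bracket (S.bracket c a) b) := by
    rw [S.bracket_skew a c, bracket_neg_left, map_neg]
  simp only [SkewAlgebroid.dOne, anchor_map_sub]
  linear_combination hj - s1 - hAL a b (η c) + hAL a c (η b) - hAL b c (η a)

lemma hxi (hξΩ : ∀ a : G, S.dOne η ξ a = 0) (hηξ : η ξ = 1) (x : G) :
    S.anchor ξ (η x) = η (S.bracket ξ x) := by
  have h := hξΩ x
  simp only [SkewAlgebroid.dOne, hηξ, anchor_one] at h
  linear_combination h

variable (he : ∀ a b : G, e a b = -(S.dOne η a b) + η a * η b)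
  (hξΩ : ∀ a : G, S.dOne η ξ a = 0) (hηξ : η ξ = 1)

include he hξΩ hηξ

lemma e_xi : e ξ = η := by
  ext x; rw [he, hξΩ, hηξ]; ring

lemma e_apply_xi (b : G) : e b ξ = η b := by
  rw [he, dOne_skew S η b ξ, hξΩ, hηξ]; ring

omit hξΩ hηξ in
lemma sep (x : G) (h : ∀ β : G →ₗ[R] R, β x = 0) : x = 0 := by
  have hx : η x = 0 := h η
  have hex : e x = 0 := by
    ext b
    have h1 := h (e b)
    rw [he] at h1
    have h2 := dOne_skew S η x b
    simp only [LinearMap.zero_apply]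
    rw [he]
    linear_combination -h2 - h1 + 2 * η b * hx
  have := congrArg e.symm hex
  rwa [e.symm_apply_apply, map_zero] at this

variable (sP : (G →ₗ[R] R) → G)
  (hsP : ∀ α β : G →ₗ[R] R, β (sP α) = S.dOne η (e.symm α) (e.symm β))

include hsP

lemma sP_eq (a : G) : sP (e a) = a - η a • ξ := by
  have h : sP (e a) - (a - η a • ξ) = 0 := by
    apply sep S η e he
    intro β
    rw [map_sub, map_sub, map_smul, hsP, e.symm_apply_apply, smul_eq_mul]
    have hβ : β = e (e.symm β) := (e.apply_symm_apply β).symm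
    set b := e.symm β with hb
    rw [hβ]
    rw [he (e.symm β) a, e_apply_xi S η ξ e he hξΩ hηξ]
    linear_combination dOne_skew S η a (e.symm β)
  exact sub_eq_zero.mp h

lemma sharp_eq (α : G →ₗ[R] R) : SkewAlgebroid.sharpJ sP ξ α = e.symm α := by
  have hα : α = e (e.symm α) := (e.apply_symm_apply α).symm
  rw [SkewAlgebroid.sharpJ]
  conv_lhs => rw [hα]
  rw [sP_eq S η ξ e he hξΩ hηξ sP hsP, e_apply_xi S η ξ e he hξΩ hηξ]
  module

omit he hξΩ hηξ hsP in
lemma lieDeriv_sub_smul (a : G) (φ : R) (α : G →ₗ[R] R) (c : G) :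
    S.lieDeriv (a - φ • ξ) α c
      = S.lieDeriv a α c - φ * S.lieDeriv ξ α c - S.anchor c φ * α ξ := by
  simp only [SkewAlgebroid.lieDeriv, LinearMap.coe_mk, AddHom.coe_mk]
  rw [anchor_sub, S.anchor_smul, bracket_sub_left, bracket_smul_left,
    map_sub, map_sub, map_smul, map_smul]
  simp only [smul_eq_mul]
  ring

lemma key (hJac : S.IsJacobi) (hAL : S.IsAlmostLie) (a b c : G) :
    S.bracketJ sP ξ η (e a) (e b) c = e (S.bracket a b) c := by
  have hsa := sP_eq S η ξ e he hξΩ hηξ sP hsP a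
  have hsb := sP_eq S η ξ e he hξΩ hηξ sP hsP b
  have hd := dOmega_zero S η hJac hAL a b c
  have sw1 := dOne_skew S η b (S.bracket a c)
  have sw2 := dOne_skew S η a (S.bracket b c)
  have r_ab : S.dOne η a b
      = S.anchor a (η b) - S.anchor b (η a) - η (S.bracket a b) := rfl
  have r_ac : S.dOne η a c
      = S.anchor a (η c) - S.anchor c (η a) - η (S.bracket a c) := rfl
  have r_bc : S.dOne η b c
      = S.anchor b (η c) - S.anchor c (η b) - η (S.bracket b c) := rfl
  have s4 := dOne_skew S η b a
  have s3a : S.anchor c (S.dOne η b a) = - S.anchor c (S.dOne η a b) := by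
    rw [dOne_skew S η b a, anchor_map_neg]
  simp only [SkewAlgebroid.bracketJ, SkewAlgebroid.koszul, LinearMap.add_apply,
    LinearMap.sub_apply, LinearMap.smul_apply, smul_eq_mul, SkewAlgebroid.biv, hsP,
    e.symm_apply_apply, SkewAlgebroid.dform, LinearMap.coe_mk, AddHom.coe_mk, hsa, hsb,
    map_sub, map_smul, smul_eq_mul, e_apply_xi S η ξ e he hξΩ hηξ]
  rw [lieDeriv_sub_smul S ξ a (η a) (e b) c, lieDeriv_sub_smul S ξ b (η b) (e a) c]
  simp only [e_apply_xi S η ξ e he hξΩ hηξ]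
  have hLa : S.lieDeriv a (e b) c
      = S.anchor a ((e b) c) - (e b) (S.bracket a c) := rfl
  have hLb : S.lieDeriv b (e a) c
      = S.anchor b ((e a) c) - (e a) (S.bracket b c) := rfl
  rw [hLa, hLb]
  simp only [he]
  simp only [S.anchor_map_add, anchor_map_neg, anchor_map_sub, S.anchor_map_mul]
  linear_combination -hd + sw1 - sw2 - η b * r_ac + η a * r_bc - η c * r_ab + s3a + η c * s4

end Contact

end ContactAux

/-- for a contact Lie algebroid `(A,ρ,[.,.],η)` with associated Jacobi
structure `(Π,ξ)`: `♯_{Π,ξ}(η) = ξ`, `♯_{Π,ξ}` intertwines `[.,.]^η_{Π,ξ}` with the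
bracket of `A`, and `(A*, ρ_{Π,ξ}, [.,.]^η_{Π,ξ})` is a Lie algebroid. -/
theorem contact_dual_lie_algebroid
    (S : SkewAlgebroid R G) (hJac : S.IsJacobi) (hAL : S.IsAlmostLie)
    (η : G →ₗ[R] R) (ξ : G)
    (hξΩ : ∀ a : G, S.dOne η ξ a = 0) (hηξ : η ξ = 1)
    (e : G ≃ₗ[R] (G →ₗ[R] R))
    (he : ∀ a b : G, e a b = -(S.dOne η a b) + η a * η b)
    (sP : (G →ₗ[R] R) → G)
    (hsP : ∀ α β : G →ₗ[R] R, β (sP α) = S.dOne η (e.symm α) (e.symm β)) :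
    sharpJ sP ξ η = ξ
    ∧ (∀ α β : G →ₗ[R] R,
        sharpJ sP ξ (S.bracketJ sP ξ η α β)
          = S.bracket (sharpJ sP ξ α) (sharpJ sP ξ β))
    ∧ (∀ α β γ : G →ₗ[R] R,
        S.bracketJ sP ξ η (S.bracketJ sP ξ η α β) γ
          + S.bracketJ sP ξ η (S.bracketJ sP ξ η β γ) α
          + S.bracketJ sP ξ η (S.bracketJ sP ξ η γ α) β = 0) := by
  have hbr : ∀ α β : G →ₗ[R] R,
      S.bracketJ sP ξ η α β = e (S.bracket (e.symm α) (e.symm β)) := by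
    intro α β
    ext c
    have h := ContactAux.key S η ξ e he hξΩ hηξ sP hsP hJac hAL (e.symm α) (e.symm β) c
    rwa [e.apply_symm_apply, e.apply_symm_apply] at h
  have hsh := ContactAux.sharp_eq S η ξ e he hξΩ hηξ sP hsP
  refine ⟨?_, ?_, ?_⟩
  · rw [hsh, ← ContactAux.e_xi S η ξ e he hξΩ hηξ, e.symm_apply_apply]
  · intro α β
    rw [hsh, hbr, e.symm_apply_apply, hsh, hsh]
  · intro α β γ
    simp only [hbr, e.symm_apply_apply]
    rw [← map_add, ← map_add, hJac, map_zero]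
end
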